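/- Let U, U* ∈ ℝ^{n×r} have orthonormal columns, let V* ∈ ℝ^{d×r} have orthonormal columns, and let Σ* ∈ ℝ^{r×r} be diagonal with every diagonal entry at least σ_r > 0. Then for every unit vector x ∈ ℝ^r: ‖x^T·(U^T·U*·Σ*·(V*)^T)‖ ≥ σ_r·√(1 − ‖(I − U·U^T)·U*‖²); i.e., the smallest singular value of the r×d matrix U^TU*Σ*(V*)^T is at least σ_r·√(1 − ‖(I − UU^T)U*‖²). -/

import Mathlib

open Matrix

/-- Spectral norm (largest singular value) of a real matrix, as the operator
norm of the induced map between Euclidean spaces. -/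
noncomputable def specNorm {n₁ n₂ : ℕ} (A : Matrix (Fin n₁) (Fin n₂) ℝ) : ℝ :=
  ‖LinearMap.toContinuousLinearMap (Matrix.toEuclideanLin A)‖

/-- sum of squares of `M *ᵥ z` as a quadratic form. -/
lemma sq_sum_mulVec {a b : ℕ} (M : Matrix (Fin a) (Fin b) ℝ) (z : Fin b → ℝ) :
    ∑ i, (M.mulVec z i) ^ 2 = z ⬝ᵥ ((Mᵀ * M).mulVec z) := by
  have h1 : ∑ i, (M.mulVec z i) ^ 2 = (M.mulVec z) ⬝ᵥ (M.mulVec z) := by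
    simp [dotProduct, sq]
  rw [h1, Matrix.dotProduct_mulVec, ← Matrix.mulVec_transpose,
    ← Matrix.mulVec_mulVec, dotProduct_comm]

/-- specNorm bound as a sum-of-squares bound. -/
lemma specNorm_bound {a b : ℕ} (M : Matrix (Fin a) (Fin b) ℝ) (z : Fin b → ℝ) :
    ∑ i, (M.mulVec z i) ^ 2 ≤ specNorm M ^ 2 * ∑ k, (z k) ^ 2 := by
  have h := (LinearMap.toContinuousLinearMap (Matrix.toEuclideanLin M)).le_opNorm
    ((WithLp.equiv 2 (Fin b → ℝ)).symm z)
  have hn : ‖(WithLp.equiv 2 (Fin b → ℝ)).symm z‖ = Real.sqrt (∑ k, (z k) ^ 2) := by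
    rw [EuclideanSpace.norm_eq]
    simp [sq_abs]
  have hm : ‖(LinearMap.toContinuousLinearMap (Matrix.toEuclideanLin M))
      ((WithLp.equiv 2 (Fin b → ℝ)).symm z)‖ = Real.sqrt (∑ i, (M.mulVec z i) ^ 2) := by
    rw [show ((LinearMap.toContinuousLinearMap (Matrix.toEuclideanLin M))
        ((WithLp.equiv 2 (Fin b → ℝ)).symm z)) =
        (WithLp.equiv 2 (Fin a → ℝ)).symm (M.mulVec z) from rfl]
    rw [EuclideanSpace.norm_eq]
    simp [sq_abs]
  rw [hn, hm] at h
  have h0 : (0:ℝ) ≤ specNorm M := norm_nonneg _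
  calc ∑ i, (M.mulVec z i) ^ 2
      = Real.sqrt (∑ i, (M.mulVec z i) ^ 2) ^ 2 := by
        rw [Real.sq_sqrt]; positivity
    _ ≤ (specNorm M * Real.sqrt (∑ k, (z k) ^ 2)) ^ 2 := by
        apply pow_le_pow_left₀ (Real.sqrt_nonneg _) h
    _ = specNorm M ^ 2 * ∑ k, (z k) ^ 2 := by
        rw [mul_pow, Real.sq_sqrt]; positivity

/-- Lower singular-value bound transfers to the transpose (square matrices). -/
lemma transpose_lower {r : ℕ} (A : Matrix (Fin r) (Fin r) ℝ) (c : ℝ) (hc : 0 < c)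
    (h : ∀ z, c * ∑ k, (z k) ^ 2 ≤ ∑ k, (Aᵀ.mulVec z k) ^ 2) :
    ∀ x, c * ∑ k, (x k) ^ 2 ≤ ∑ k, (A.mulVec x k) ^ 2 := by
  have hker : ∀ z : Fin r → ℝ, Aᵀ.mulVec z = 0 → z = 0 := by
    intro z hz
    have h1 := h z
    rw [hz] at h1
    simp only [Pi.zero_apply, ne_eq, OfNat.ofNat_ne_zero, not_false_eq_true, zero_pow,
      Finset.sum_const_zero] at h1
    have hs0 : (0:ℝ) ≤ ∑ k, (z k) ^ 2 := by positivity
    have hs : ∑ k, (z k) ^ 2 = 0 := by nlinarith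
    funext k
    have := (Finset.sum_eq_zero_iff_of_nonneg (fun i _ => sq_nonneg (z i))).mp hs k
      (Finset.mem_univ k)
    exact pow_eq_zero_iff (n := 2) (by norm_num) |>.mp this
  have hinj : Function.Injective (Matrix.toLin' Aᵀ) := by
    apply (injective_iff_map_eq_zero _).mpr
    intro z hz
    exact hker z (by simpa [Matrix.toLin'_apply] using hz)
  have hsurj : Function.Surjective (Matrix.toLin' Aᵀ) :=
    LinearMap.injective_iff_surjective.mp hinj
  intro x
  obtain ⟨y, hy⟩ := hsurj x
  have hy' : Aᵀ.mulVec y = x := by simpa [Matrix.toLin'_apply] using hy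
  have hYx : c * ∑ k, (y k) ^ 2 ≤ ∑ k, (x k) ^ 2 := by
    have := h y
    rw [hy'] at this
    exact this
  have hdot : ∑ k, (x k) ^ 2 = y ⬝ᵥ (A.mulVec x) := by
    have h1 : ∑ k, (x k) ^ 2 = x ⬝ᵥ x := by simp [dotProduct, sq]
    rw [h1]
    nth_rewrite 1 [← hy']
    rw [Matrix.mulVec_transpose, ← Matrix.dotProduct_mulVec]
  have hCS : (y ⬝ᵥ (A.mulVec x)) ^ 2 ≤ (∑ k, (y k) ^ 2) * ∑ k, (A.mulVec x k) ^ 2 :=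
    Finset.sum_mul_sq_le_sq_mul_sq _ _ _
  have hS0 : (0:ℝ) ≤ ∑ k, (x k) ^ 2 := by positivity
  have hT0 : (0:ℝ) ≤ ∑ k, (A.mulVec x k) ^ 2 := by positivity
  have hY0 : (0:ℝ) ≤ ∑ k, (y k) ^ 2 := by positivity
  rcases hS0.eq_or_lt' with hS | hS
  · nlinarith
  · rw [← hdot] at hCS
    nlinarith

lemma gram_identity {n r : ℕ} (U Ustar : Matrix (Fin n) (Fin r) ℝ)
    (hU : Uᵀ * U = 1) (hUstar : Ustarᵀ * Ustar = 1) :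
    ((1 - U * Uᵀ) * Ustar)ᵀ * ((1 - U * Uᵀ) * Ustar)
      = 1 - (Uᵀ * Ustar)ᵀ * (Uᵀ * Ustar) := by
  have ht : ((1 - U * Uᵀ) * Ustar)ᵀ = Ustarᵀ * (1 - U * Uᵀ) := by
    rw [Matrix.transpose_mul, Matrix.transpose_sub, Matrix.transpose_one,
      Matrix.transpose_mul, Matrix.transpose_transpose]
  have hPP : (U * Uᵀ) * (U * Uᵀ) = U * Uᵀ := by
    rw [Matrix.mul_assoc, ← Matrix.mul_assoc Uᵀ U Uᵀ, hU, Matrix.one_mul]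
  have hidem : (1 - U * Uᵀ) * (1 - U * Uᵀ) = 1 - U * Uᵀ := by
    rw [Matrix.mul_sub, Matrix.sub_mul, Matrix.sub_mul, hPP]
    simp only [Matrix.mul_one, Matrix.one_mul]
    abel
  rw [ht, Matrix.transpose_mul, Matrix.transpose_transpose]
  calc Ustarᵀ * (1 - U * Uᵀ) * ((1 - U * Uᵀ) * Ustar)
      = Ustarᵀ * ((1 - U * Uᵀ) * (1 - U * Uᵀ)) * Ustar := by
        rw [← Matrix.mul_assoc (Ustarᵀ * (1 - U * Uᵀ)) (1 - U * Uᵀ) Ustar,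
          Matrix.mul_assoc Ustarᵀ (1 - U * Uᵀ) (1 - U * Uᵀ)]
    _ = Ustarᵀ * (1 - U * Uᵀ) * Ustar := by rw [hidem]
    _ = Ustarᵀ * Ustar - Ustarᵀ * U * (Uᵀ * Ustar) := by
        rw [Matrix.mul_sub, Matrix.mul_one, Matrix.sub_mul]
        congr 1
        rw [← Matrix.mul_assoc Ustarᵀ U Uᵀ, Matrix.mul_assoc (Ustarᵀ * U) Uᵀ Ustar]
    _ = 1 - Ustarᵀ * U * (Uᵀ * Ustar) := by rw [hUstar]

theorem stmt8 {n d r : ℕ}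
    (U Ustar : Matrix (Fin n) (Fin r) ℝ) (Vstar : Matrix (Fin d) (Fin r) ℝ)
    (hU : Uᵀ * U = 1) (hUstar : Ustarᵀ * Ustar = 1) (hVstar : Vstarᵀ * Vstar = 1)
    (σ : Fin r → ℝ) (σr : ℝ) (hσr : 0 < σr) (hσ : ∀ k, σr ≤ σ k)
    (x : Fin r → ℝ) (hx : ∑ k, (x k) ^ 2 = 1) :
    σr * Real.sqrt (1 - specNorm ((1 - U * Uᵀ) * Ustar) ^ 2) ≤
      Real.sqrt (∑ j, (Matrix.vecMul x (Uᵀ * Ustar * Matrix.diagonal σ * Vstarᵀ) j) ^ 2) := by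
  set B := (1 - U * Uᵀ) * Ustar with hB
  set ε := specNorm B with hε
  have hε0 : (0:ℝ) ≤ ε := norm_nonneg _
  rcases le_or_gt (1 - ε ^ 2) 0 with hcase | hcase
  · have hz : Real.sqrt (1 - ε ^ 2) = 0 := Real.sqrt_eq_zero'.mpr hcase
    rw [hz, mul_zero]
    exact Real.sqrt_nonneg _
  · have hlow : ∀ z : Fin r → ℝ,
        (1 - ε ^ 2) * ∑ k, (z k) ^ 2 ≤ ∑ k, ((Uᵀ * Ustar).mulVec z k) ^ 2 := by
      intro z
      have h1 := sq_sum_mulVec (Uᵀ * Ustar) z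
      have h2 := sq_sum_mulVec B z
      have h3 := specNorm_bound B z
      rw [hB, gram_identity U Ustar hU hUstar, Matrix.sub_mulVec, Matrix.one_mulVec,
        dotProduct_sub] at h2
      have h4 : z ⬝ᵥ z = ∑ k, (z k) ^ 2 := by simp [dotProduct, sq]
      rw [h4] at h2
      nlinarith [h1, h2, h3]
    have htA : (Ustarᵀ * U)ᵀ = Uᵀ * Ustar := by
      rw [Matrix.transpose_mul, Matrix.transpose_transpose]
    have htrans := transpose_lower (Ustarᵀ * U) (1 - ε ^ 2) hcase
      (fun z => by rw [htA]; exact hlow z) x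
    rw [hx, mul_one] at htrans
    set y := Matrix.vecMul x (Uᵀ * Ustar) with hy
    have hyy : (Ustarᵀ * U).mulVec x = y := by
      rw [hy, ← Matrix.mulVec_transpose, ← htA, Matrix.transpose_transpose]
    rw [hyy] at htrans
    have hsum : ∑ j, (Matrix.vecMul x (Uᵀ * Ustar * Matrix.diagonal σ * Vstarᵀ) j) ^ 2
        = ∑ k, (y k * σ k) ^ 2 := by
      have e1 : Matrix.vecMul x (Uᵀ * Ustar * Matrix.diagonal σ * Vstarᵀ)
          = Matrix.vecMul (Matrix.vecMul x (Uᵀ * Ustar * Matrix.diagonal σ)) Vstarᵀ := by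
        rw [Matrix.vecMul_vecMul]
      have e2 : Matrix.vecMul x (Uᵀ * Ustar * Matrix.diagonal σ)
          = Matrix.vecMul y (Matrix.diagonal σ) := by rw [hy, Matrix.vecMul_vecMul]
      rw [e1, e2, Matrix.vecMul_transpose, sq_sum_mulVec Vstar _, hVstar, Matrix.one_mulVec]
      simp [dotProduct, Matrix.vecMul_diagonal, sq]
    have hterm : σr ^ 2 * ∑ k, (y k) ^ 2 ≤ ∑ k, (y k * σ k) ^ 2 := by
      rw [Finset.mul_sum]
      apply Finset.sum_le_sum
      intro k _
      have hk := hσ k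
      have h2 : σr ^ 2 ≤ σ k ^ 2 := by nlinarith
      calc σr ^ 2 * y k ^ 2 ≤ σ k ^ 2 * y k ^ 2 :=
            mul_le_mul_of_nonneg_right h2 (sq_nonneg _)
        _ = (y k * σ k) ^ 2 := by ring
    have hfinal : σr ^ 2 * (1 - ε ^ 2)
        ≤ ∑ j, (Matrix.vecMul x (Uᵀ * Ustar * Matrix.diagonal σ * Vstarᵀ) j) ^ 2 := by
      rw [hsum]
      nlinarith [htrans, hterm, sq_nonneg σr]
    calc σr * Real.sqrt (1 - ε ^ 2) = Real.sqrt (σr ^ 2 * (1 - ε ^ 2)) := by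
          rw [Real.sqrt_mul (sq_nonneg σr), Real.sqrt_sq hσr.le]
      _ ≤ _ := Real.sqrt_le_sqrt hfinal
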